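/- The convolution of the standard normal density φ with the j-th Hermite function h_j satisfies φ ⋆ h_j(x) = (2 π^{1/2} 2^j j!)^{-1/2} · exp(-x²/4) · x^j. -/

import Mathlib

open MeasureTheory

/-- Physicists' Hermite polynomial `H_j(x) = (-1)^j e^{x²} (d^j/dx^j) e^{-x²}`. -/
noncomputable def physHermite (j : ℕ) (x : ℝ) : ℝ :=
  (-1 : ℝ) ^ j * Real.exp (x ^ 2) * iteratedDeriv j (fun y : ℝ => Real.exp (-(y ^ 2))) x

/-- Hermite function `h_j(x) = (2^j j! √π)^{-1/2} H_j(x) e^{-x²/2}`. -/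
noncomputable def hermiteFun (j : ℕ) (x : ℝ) : ℝ :=
  (Real.sqrt (2 ^ j * (Nat.factorial j : ℝ) * Real.sqrt Real.pi))⁻¹
    * physHermite j x * Real.exp (-(x ^ 2) / 2)

open Polynomial Filter in
/-- Physicists' Hermite polynomials as polynomials. -/
noncomputable def physP : ℕ → Polynomial ℝ
  | 0 => 1
  | n + 1 => Polynomial.C 2 * Polynomial.X * physP n - Polynomial.derivative (physP n)

open Polynomial Filter Real in
lemma iterDeriv_gauss (n : ℕ) (x : ℝ) :
    deriv^[n] (fun y : ℝ => Real.exp (-(y ^ 2))) x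
      = (-1 : ℝ) ^ n * (physP n).eval x * Real.exp (-(x ^ 2)) := by
  induction' n with n ih generalizing x
  · simp [physP]
  · replace ih : deriv^[n] _ = _ := funext ih
    have hd : ∀ y : ℝ, HasDerivAt (fun z : ℝ => Real.exp (-(z ^ 2)))
        (Real.exp (-(y ^ 2)) * (-(2 * y))) y := by
      intro y
      have h1 : HasDerivAt (fun z : ℝ => -(z ^ 2)) (-(2 * y)) y := by
        simpa using (hasDerivAt_pow 2 y).fun_neg
      exact h1.exp
    have hP : ∀ y : ℝ, HasDerivAt (fun z : ℝ => (-1 : ℝ) ^ n * (physP n).eval z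
        * Real.exp (-(z ^ 2)))
        ((-1 : ℝ) ^ n * ((physP n).derivative.eval y * Real.exp (-(y ^ 2))
          + (physP n).eval y * (Real.exp (-(y ^ 2)) * (-(2 * y))))) y := by
      intro y
      have h2 : HasDerivAt (fun z : ℝ => (physP n).eval z * Real.exp (-(z ^ 2)))
          ((physP n).derivative.eval y * Real.exp (-(y ^ 2))
            + (physP n).eval y * (Real.exp (-(y ^ 2)) * (-(2 * y)))) y :=
        ((physP n).hasDerivAt y).mul (hd y)
      simpa [mul_assoc] using h2.const_mul ((-1 : ℝ) ^ n)
    rw [Function.iterate_succ_apply', ih, (hP x).deriv]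
    show _ = (-1 : ℝ) ^ (n + 1) * (physP (n + 1)).eval x * Real.exp (-(x ^ 2))
    simp only [physP, eval_sub, eval_mul, eval_C, eval_X, pow_succ]
    ring

open Polynomial in
lemma physHermite_eq (j : ℕ) (x : ℝ) : physHermite j x = (physP j).eval x := by
  rw [physHermite, iteratedDeriv_eq_iterate, iterDeriv_gauss]
  have h1 : Real.exp (x ^ 2) * Real.exp (-(x ^ 2)) = 1 := by
    rw [← Real.exp_add]; simp
  have h2 : ((-1 : ℝ) ^ j) * ((-1 : ℝ) ^ j) = 1 := by
    rw [← pow_add, Even.neg_one_pow ⟨j, rfl⟩]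
  calc (-1 : ℝ) ^ j * Real.exp (x ^ 2)
        * ((-1 : ℝ) ^ j * (physP j).eval x * Real.exp (-(x ^ 2)))
      = ((-1 : ℝ) ^ j * (-1 : ℝ) ^ j) * (Real.exp (x ^ 2) * Real.exp (-(x ^ 2)))
        * (physP j).eval x := by ring
    _ = (physP j).eval x := by rw [h1, h2]; ring

lemma integrable_pow_gauss (n : ℕ) :
    Integrable fun v : ℝ => v ^ n * Real.exp (-(v ^ 2)) := by
  have h := integrable_rpow_mul_exp_neg_mul_sq (b := 1) one_pos
    (s := (n : ℝ)) (lt_of_lt_of_le neg_one_lt_zero (Nat.cast_nonneg n))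
  simpa [Real.rpow_natCast, neg_one_mul] using h

open Polynomial in
lemma integrable_poly_gauss (p : Polynomial ℝ) :
    Integrable fun v : ℝ => p.eval v * Real.exp (-(v ^ 2)) := by
  induction p using Polynomial.induction_on' with
  | add p q hp hq => simpa [add_mul] using hp.fun_add hq
  | monomial n a =>
      simp only [eval_monomial]
      simpa [mul_assoc] using (integrable_pow_gauss n).const_mul a

open Filter in
lemma tendsto_pow_gauss (n : ℕ) :
    Tendsto (fun v : ℝ => v ^ n * Real.exp (-(v ^ 2))) atTop (nhds 0) := by
  apply squeeze_zero' ?_ ?_ (Real.tendsto_pow_mul_exp_neg_atTop_nhds_zero n)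
  · filter_upwards [eventually_ge_atTop (0 : ℝ)] with v hv
    positivity
  · filter_upwards [eventually_ge_atTop (1 : ℝ)] with v hv
    have hv0 : (0 : ℝ) ≤ v ^ n := by positivity
    have : Real.exp (-(v ^ 2)) ≤ Real.exp (-v) := by
      apply Real.exp_le_exp.2
      nlinarith
    exact mul_le_mul_of_nonneg_left this hv0

open Polynomial Filter in
lemma tendsto_poly_gauss_atTop (p : Polynomial ℝ) :
    Tendsto (fun v : ℝ => p.eval v * Real.exp (-(v ^ 2))) atTop (nhds 0) := by
  induction p using Polynomial.induction_on' with
  | add p q hp hq =>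
      have := hp.add hq
      simpa [add_mul] using this
  | monomial n a =>
      simp only [eval_monomial]
      have := (tendsto_pow_gauss n).const_mul a
      simpa [mul_assoc] using this

open Polynomial Filter in
lemma tendsto_poly_gauss_atBot (p : Polynomial ℝ) :
    Tendsto (fun v : ℝ => p.eval v * Real.exp (-(v ^ 2))) atBot (nhds 0) := by
  have h := (tendsto_poly_gauss_atTop (p.comp (-X))).comp tendsto_neg_atBot_atTop
  refine h.congr fun v => ?_
  simp [eval_comp]

open Polynomial in
lemma integral_deriv_gauss_zero (q : Polynomial ℝ) :
    ∫ v : ℝ, (q.derivative.eval v - 2 * v * q.eval v) * Real.exp (-(v ^ 2)) = 0 := by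
  have hd : ∀ v : ℝ, HasDerivAt (fun z : ℝ => q.eval z * Real.exp (-(z ^ 2)))
      ((q.derivative.eval v - 2 * v * q.eval v) * Real.exp (-(v ^ 2))) v := by
    intro v
    have h1 : HasDerivAt (fun z : ℝ => -(z ^ 2)) (-(2 * v)) v := by
      simpa using (hasDerivAt_pow 2 v).fun_neg
    have h2 := (q.hasDerivAt v).fun_mul h1.exp
    exact h2.congr_deriv (by ring)
  have hint : Integrable fun v : ℝ =>
      (q.derivative.eval v - 2 * v * q.eval v) * Real.exp (-(v ^ 2)) := by
    have := integrable_poly_gauss (q.derivative - C 2 * X * q)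
    refine this.congr (Filter.Eventually.of_forall fun v => ?_)
    simp only [Polynomial.eval_sub, Polynomial.eval_mul, Polynomial.eval_C, Polynomial.eval_X]
  have := MeasureTheory.integral_of_hasDerivAt_of_tendsto hd hint
    (tendsto_poly_gauss_atBot q) (tendsto_poly_gauss_atTop q)
  simpa using this

open Polynomial in
lemma key_integral (j : ℕ) (a : ℝ) :
    ∫ v : ℝ, (physP j).eval (v + a) * Real.exp (-(v ^ 2))
      = (2 * a) ^ j * Real.sqrt Real.pi := by
  induction' j with j ih
  · have h := integral_gaussian 1
    simp only [physP, eval_one, one_mul, pow_zero]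
    simpa [neg_one_mul] using h
  · set p := physP j with hp
    set q := p.comp (X + C a) with hq
    have hqe : ∀ v : ℝ, q.eval v = p.eval (v + a) := fun v => by simp [hq, eval_comp]
    have hqd : q.derivative = p.derivative.comp (X + C a) := by
      simp [hq, derivative_comp]
    have hqde : ∀ v : ℝ, q.derivative.eval v = p.derivative.eval (v + a) := fun v => by
      simp [hqd, eval_comp]
    have heq : ∀ v : ℝ, (physP (j + 1)).eval (v + a) * Real.exp (-(v ^ 2))
        = 2 * a * (q.eval v * Real.exp (-(v ^ 2)))
          - (q.derivative.eval v - 2 * v * q.eval v) * Real.exp (-(v ^ 2)) := by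
      intro v
      simp only [physP, eval_sub, eval_mul, eval_C, eval_X, hqe, hqde]
      ring
    have hint1 : Integrable fun v : ℝ => 2 * a * (q.eval v * Real.exp (-(v ^ 2))) :=
      (integrable_poly_gauss q).const_mul _
    have hint2 : Integrable fun v : ℝ =>
        (q.derivative.eval v - 2 * v * q.eval v) * Real.exp (-(v ^ 2)) := by
      have := integrable_poly_gauss (q.derivative - C 2 * X * q)
      refine this.congr (Filter.Eventually.of_forall fun v => ?_)
      simp only [Polynomial.eval_sub, Polynomial.eval_mul, Polynomial.eval_C, Polynomial.eval_X]
    calc ∫ v : ℝ, (physP (j + 1)).eval (v + a) * Real.exp (-(v ^ 2))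
        = ∫ v : ℝ, (2 * a * (q.eval v * Real.exp (-(v ^ 2)))
            - (q.derivative.eval v - 2 * v * q.eval v) * Real.exp (-(v ^ 2))) := by
          exact integral_congr_ae (Filter.Eventually.of_forall fun v => heq v)
      _ = (∫ v : ℝ, 2 * a * (q.eval v * Real.exp (-(v ^ 2))))
            - ∫ v : ℝ, (q.derivative.eval v - 2 * v * q.eval v) * Real.exp (-(v ^ 2)) :=
          integral_sub hint1 hint2
      _ = 2 * a * ((2 * a) ^ j * Real.sqrt Real.pi) - 0 := by
          rw [integral_deriv_gauss_zero, MeasureTheory.integral_const_mul]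
          simp only [hqe]
          rw [ih]
      _ = (2 * a) ^ (j + 1) * Real.sqrt Real.pi := by ring

/-- Convolution of the standard normal density `φ` with the `j`-th Hermite function:
`(φ ⋆ h_j)(x) = (2 π^{1/2} 2^j j!)^{-1/2} e^{-x²/4} x^j`. -/
theorem stmt11 (j : ℕ) (x : ℝ) :
    (∫ μ : ℝ, hermiteFun j μ * ((Real.sqrt (2 * Real.pi))⁻¹ * Real.exp (-(x - μ) ^ 2 / 2)))
      = (Real.sqrt (2 * Real.sqrt Real.pi * 2 ^ j * (Nat.factorial j : ℝ)))⁻¹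
        * Real.exp (-(x ^ 2) / 4) * x ^ j := by
  set c₁ : ℝ := (Real.sqrt (2 ^ j * (Nat.factorial j : ℝ) * Real.sqrt Real.pi))⁻¹ with hc₁
  set c₂ : ℝ := (Real.sqrt (2 * Real.pi))⁻¹ with hc₂
  set K : ℝ := c₁ * c₂ * Real.exp (-(x ^ 2) / 4) with hK
  have hpt : ∀ μ : ℝ, hermiteFun j μ * (c₂ * Real.exp (-(x - μ) ^ 2 / 2))
      = K * ((physP j).eval μ * Real.exp (-((μ - x / 2) ^ 2))) := by
    intro μ
    rw [hermiteFun, physHermite_eq]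
    have hexp : Real.exp (-(μ ^ 2) / 2) * Real.exp (-(x - μ) ^ 2 / 2)
        = Real.exp (-(x ^ 2) / 4) * Real.exp (-((μ - x / 2) ^ 2)) := by
      rw [← Real.exp_add, ← Real.exp_add]
      congr 1
      ring
    calc c₁ * (physP j).eval μ * Real.exp (-(μ ^ 2) / 2)
          * (c₂ * Real.exp (-(x - μ) ^ 2 / 2))
        = c₁ * c₂ * (physP j).eval μ
            * (Real.exp (-(μ ^ 2) / 2) * Real.exp (-(x - μ) ^ 2 / 2)) := by ring
      _ = K * ((physP j).eval μ * Real.exp (-((μ - x / 2) ^ 2))) := by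
          rw [hexp, hK]; ring
  have htrans : (∫ μ : ℝ, (physP j).eval μ * Real.exp (-((μ - x / 2) ^ 2)))
      = ∫ v : ℝ, (physP j).eval (v + x / 2) * Real.exp (-(v ^ 2)) := by
    rw [← integral_add_right_eq_self
      (fun μ : ℝ => (physP j).eval μ * Real.exp (-((μ - x / 2) ^ 2))) (x / 2)]
    refine integral_congr_ae (Filter.Eventually.of_forall fun v => ?_)
    simp
  have hkey := key_integral j (x / 2)
  have hxval : (2 * (x / 2)) ^ j = x ^ j := by rw [show 2 * (x / 2) = x by ring]
  calc (∫ μ : ℝ, hermiteFun j μ * (c₂ * Real.exp (-(x - μ) ^ 2 / 2)))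
      = ∫ μ : ℝ, K * ((physP j).eval μ * Real.exp (-((μ - x / 2) ^ 2))) :=
        integral_congr_ae (Filter.Eventually.of_forall fun μ => hpt μ)
    _ = K * ∫ μ : ℝ, (physP j).eval μ * Real.exp (-((μ - x / 2) ^ 2)) :=
        MeasureTheory.integral_const_mul _ _
    _ = K * (x ^ j * Real.sqrt Real.pi) := by rw [htrans, hkey, hxval]
    _ = (Real.sqrt (2 * Real.sqrt Real.pi * 2 ^ j * (Nat.factorial j : ℝ)))⁻¹
        * Real.exp (-(x ^ 2) / 4) * x ^ j := by
        rw [hK, hc₁, hc₂]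
        have hfac : (0 : ℝ) < (Nat.factorial j : ℝ) := by
          exact_mod_cast j.factorial_pos
        have hπ : (0 : ℝ) < Real.pi := Real.pi_pos
        have hsπ : (0 : ℝ) < Real.sqrt Real.pi := Real.sqrt_pos.2 hπ
        have hmain : (Real.sqrt (2 ^ j * (Nat.factorial j : ℝ) * Real.sqrt Real.pi))⁻¹
            * (Real.sqrt (2 * Real.pi))⁻¹ * Real.sqrt Real.pi
            = (Real.sqrt (2 * Real.sqrt Real.pi * 2 ^ j * (Nat.factorial j : ℝ)))⁻¹ := by
          rw [← mul_inv, ← Real.sqrt_mul (by positivity), inv_mul_eq_div,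
            div_eq_iff (by positivity), inv_mul_eq_div, eq_div_iff (by positivity),
            ← Real.sqrt_mul hπ.le]
          congr 1
          have hself : Real.sqrt Real.pi * Real.sqrt Real.pi = Real.pi :=
            Real.mul_self_sqrt hπ.le
          nlinarith [hself]
        calc (Real.sqrt (2 ^ j * (Nat.factorial j : ℝ) * Real.sqrt Real.pi))⁻¹
              * (Real.sqrt (2 * Real.pi))⁻¹ * Real.exp (-(x ^ 2) / 4)
              * (x ^ j * Real.sqrt Real.pi)
            = ((Real.sqrt (2 ^ j * (Nat.factorial j : ℝ) * Real.sqrt Real.pi))⁻¹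
              * (Real.sqrt (2 * Real.pi))⁻¹ * Real.sqrt Real.pi)
              * Real.exp (-(x ^ 2) / 4) * x ^ j := by ring
          _ = _ := by rw [hmain]
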